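/- Let (g_t) be a flow on a space X, 𝒦 ⊂ X, and ω ∈ X such that the set {t > 0 : g_t ω ∈ 𝒦} has upper density at least 3/4 in ℝ₊. Then for every ℓ₀ > 0 there exist ℓ > ℓ₀ and a sequence t_i → ∞ such that for all i, all three points g_{t_i}ω, g_{t_i − ℓ}ω, and g_{t_i + ℓ}ω belong to 𝒦. -/

import Mathlib

open MeasureTheory

/-- If the measurable set of times {t > 0 : g_t ω ∈ 𝒦} has upper density at
least 3/4, then for every ℓ₀ > 0 there are ℓ > ℓ₀ and arbitrarily large times t such that
g_t ω, g_{t-ℓ} ω and g_{t+ℓ} ω all lie in 𝒦. -/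
theorem three_term_progression_of_upper_density {X : Type*}
    (g : ℝ → X → X) (𝒦 : Set X) (ω : X)
    (hmeas : MeasurableSet {t : ℝ | g t ω ∈ 𝒦})
    (hdens : (3 / 4 : ℝ) ≤ Filter.limsup
      (fun S : ℝ => (volume {t : ℝ | t ∈ Set.Ioc 0 S ∧ g t ω ∈ 𝒦}).toReal / S)
      Filter.atTop) :
    ∀ ℓ₀ > (0 : ℝ), ∃ ℓ > ℓ₀, ∀ T : ℝ, ∃ t > T,
      g t ω ∈ 𝒦 ∧ g (t - ℓ) ω ∈ 𝒦 ∧ g (t + ℓ) ω ∈ 𝒦 := by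
  intro ℓ₀ hℓ₀
  set A : Set ℝ := {t : ℝ | g t ω ∈ 𝒦} with hA
  set ℓ : ℝ := ℓ₀ + 1 with hℓdef
  have hℓpos : (0 : ℝ) < ℓ := by positivity
  refine ⟨ℓ, by simp [hℓdef], ?_⟩
  intro T
  by_contra hcon
  push_neg at hcon
  -- hcon : ∀ t > T, ¬ (all three in 𝒦)
  set T' : ℝ := max T ℓ with hT'
  have hT'T : T ≤ T' := le_max_left _ _
  have hT'ℓ : ℓ ≤ T' := le_max_right _ _
  have hT'pos : 0 < T' := lt_of_lt_of_le hℓpos hT'ℓ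
  -- key pointwise bound for large S
  have key : ∀ S : ℝ, T' + 1 ≤ S →
      (volume {t : ℝ | t ∈ Set.Ioc 0 S ∧ g t ω ∈ 𝒦}).toReal / S
        ≤ 2/3 + (T' + ℓ) / (3 * S) := by
    intro S hS
    have hSpos : 0 < S := by linarith
    have hT'S : T' < S := by linarith
    -- the covering
    have hcover : Set.Ioc T' S ⊆
        (Aᶜ ∩ Set.Ioc T' S) ∪ (((· + ℓ) ⁻¹' Aᶜ) ∩ Set.Ioc T' S)
          ∪ (((· + (-ℓ)) ⁻¹' Aᶜ) ∩ Set.Ioc T' S) := by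
      intro t ht
      by_contra hmem
      simp only [Set.mem_union, Set.mem_inter_iff, Set.mem_preimage, Set.mem_compl_iff,
        not_or, not_and_or, not_not] at hmem
      have h1 : t ∈ A := by tauto
      have h2 : t + ℓ ∈ A := by tauto
      have h3 : t + (-ℓ) ∈ A := by tauto
      have htT : t > T := lt_of_le_of_lt hT'T ht.1
      exact hcon t htT h1 (by rw [sub_eq_add_neg]; exact h3) h2
    have hAc : MeasurableSet (Aᶜ) := hmeas.compl
    -- measures of the three pieces
    have hsub0 : volume (Aᶜ ∩ Set.Ioc T' S) ≤ volume (Aᶜ ∩ Set.Ioc 0 S) :=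
      measure_mono (Set.inter_subset_inter_right _ (Set.Ioc_subset_Ioc_left hT'pos.le))
    have hplus : volume (((· + ℓ) ⁻¹' Aᶜ) ∩ Set.Ioc T' S)
        ≤ volume (Aᶜ ∩ Set.Ioc 0 S) + ENNReal.ofReal ℓ := by
      have heq : ((· + ℓ) ⁻¹' Aᶜ) ∩ Set.Ioc T' S
          = (· + ℓ) ⁻¹' (Aᶜ ∩ Set.Ioc (T' + ℓ) (S + ℓ)) := by
        ext t
        simp only [Set.mem_inter_iff, Set.mem_preimage, Set.mem_Ioc]
        constructor
        · rintro ⟨h, h1, h2⟩; exact ⟨h, by linarith, by linarith⟩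
        · rintro ⟨h, h1, h2⟩; exact ⟨h, by linarith, by linarith⟩
      rw [heq, measure_preimage_add_right]
      have hss : Aᶜ ∩ Set.Ioc (T' + ℓ) (S + ℓ)
          ⊆ (Aᶜ ∩ Set.Ioc 0 S) ∪ Set.Ioc S (S + ℓ) := by
        intro t ⟨ht1, ht2, ht3⟩
        rcases le_or_gt t S with h | h
        · exact Or.inl ⟨ht1, by linarith, h⟩
        · exact Or.inr ⟨h, ht3⟩
      calc volume (Aᶜ ∩ Set.Ioc (T' + ℓ) (S + ℓ))
          ≤ volume ((Aᶜ ∩ Set.Ioc 0 S) ∪ Set.Ioc S (S + ℓ)) := measure_mono hss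
        _ ≤ volume (Aᶜ ∩ Set.Ioc 0 S) + volume (Set.Ioc S (S + ℓ)) := measure_union_le _ _
        _ = volume (Aᶜ ∩ Set.Ioc 0 S) + ENNReal.ofReal ℓ := by
            rw [Real.volume_Ioc]; ring_nf
    have hminus : volume (((· + (-ℓ)) ⁻¹' Aᶜ) ∩ Set.Ioc T' S)
        ≤ volume (Aᶜ ∩ Set.Ioc 0 S) := by
      have heq : ((· + (-ℓ)) ⁻¹' Aᶜ) ∩ Set.Ioc T' S
          = (· + (-ℓ)) ⁻¹' (Aᶜ ∩ Set.Ioc (T' - ℓ) (S - ℓ)) := by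
        ext t
        simp only [Set.mem_inter_iff, Set.mem_preimage, Set.mem_Ioc]
        constructor
        · rintro ⟨h, h1, h2⟩; exact ⟨h, by linarith, by linarith⟩
        · rintro ⟨h, h1, h2⟩; exact ⟨h, by linarith, by linarith⟩
      rw [heq, measure_preimage_add_right]
      refine measure_mono (Set.inter_subset_inter_right _ ?_)
      exact Set.Ioc_subset_Ioc (by linarith) (by linarith)
    -- combine
    have hlen : ENNReal.ofReal (S - T') ≤ 3 * volume (Aᶜ ∩ Set.Ioc 0 S) + ENNReal.ofReal ℓ := by
      calc ENNReal.ofReal (S - T') = volume (Set.Ioc T' S) := (Real.volume_Ioc).symm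
        _ ≤ volume ((Aᶜ ∩ Set.Ioc T' S) ∪ (((· + ℓ) ⁻¹' Aᶜ) ∩ Set.Ioc T' S)
              ∪ (((· + (-ℓ)) ⁻¹' Aᶜ) ∩ Set.Ioc T' S)) := measure_mono hcover
        _ ≤ volume (Aᶜ ∩ Set.Ioc T' S) + volume (((· + ℓ) ⁻¹' Aᶜ) ∩ Set.Ioc T' S)
              + volume (((· + (-ℓ)) ⁻¹' Aᶜ) ∩ Set.Ioc T' S) := by
            refine le_trans (measure_union_le _ _) ?_
            exact add_le_add (measure_union_le _ _) le_rfl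
        _ ≤ 3 * volume (Aᶜ ∩ Set.Ioc 0 S) + ENNReal.ofReal ℓ := by
            calc volume (Aᶜ ∩ Set.Ioc T' S) + volume (((· + ℓ) ⁻¹' Aᶜ) ∩ Set.Ioc T' S)
                  + volume (((· + (-ℓ)) ⁻¹' Aᶜ) ∩ Set.Ioc T' S)
                ≤ volume (Aᶜ ∩ Set.Ioc 0 S)
                  + (volume (Aᶜ ∩ Set.Ioc 0 S) + ENNReal.ofReal ℓ)
                  + volume (Aᶜ ∩ Set.Ioc 0 S) :=
                  add_le_add (add_le_add hsub0 hplus) hminus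
              _ = 3 * volume (Aᶜ ∩ Set.Ioc 0 S) + ENNReal.ofReal ℓ := by ring
    -- additivity
    have hsplit : volume (A ∩ Set.Ioc 0 S) + volume (Aᶜ ∩ Set.Ioc 0 S)
        = ENNReal.ofReal S := by
      rw [Set.inter_comm A, Set.inter_comm (Aᶜ), ← Set.diff_eq,
        measure_inter_add_diff _ hmeas, Real.volume_Ioc, sub_zero]
    have hfin : volume (Aᶜ ∩ Set.Ioc 0 S) ≠ ⊤ := by
      intro h
      rw [h] at hsplit
      simp at hsplit
    have hfinA : volume (A ∩ Set.Ioc 0 S) ≠ ⊤ := by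
      intro h
      rw [h] at hsplit
      simp at hsplit
    set a : ℝ := (volume (A ∩ Set.Ioc 0 S)).toReal with ha
    set c : ℝ := (volume (Aᶜ ∩ Set.Ioc 0 S)).toReal with hc
    have hanneg : 0 ≤ a := ENNReal.toReal_nonneg
    have hcnneg : 0 ≤ c := ENNReal.toReal_nonneg
    have hsum : a + c = S := by
      have := congrArg ENNReal.toReal hsplit
      rwa [ENNReal.toReal_add hfinA hfin, ENNReal.toReal_ofReal hSpos.le] at this
    have hineq : S - T' ≤ 3 * c + ℓ := by
      have h1 : (ENNReal.ofReal (S - T')).toReal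
          ≤ (3 * volume (Aᶜ ∩ Set.Ioc 0 S) + ENNReal.ofReal ℓ).toReal := by
        refine ENNReal.toReal_mono ?_ hlen
        refine ENNReal.add_ne_top.mpr ⟨?_, ENNReal.ofReal_ne_top⟩
        exact ENNReal.mul_ne_top (by simp) hfin
      rw [ENNReal.toReal_ofReal (by linarith)] at h1
      rw [ENNReal.toReal_add (ENNReal.mul_ne_top (by simp) hfin) ENNReal.ofReal_ne_top,
        ENNReal.toReal_mul, ENNReal.toReal_ofReal hℓpos.le] at h1
      simpa using h1
    have hvol : volume {t : ℝ | t ∈ Set.Ioc 0 S ∧ g t ω ∈ 𝒦} = volume (A ∩ Set.Ioc 0 S) := by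
      congr 1
      ext t
      simp only [Set.mem_setOf_eq, Set.mem_inter_iff, hA, Set.mem_setOf_eq]
      tauto
    rw [hvol]
    rw [div_add_div _ _ (by norm_num) (by positivity), div_le_div_iff₀ hSpos (by positivity)]
    nlinarith [hsum, hineq, hSpos]
  -- conclude via limsup
  have hev : ∀ᶠ S in Filter.atTop,
      (volume {t : ℝ | t ∈ Set.Ioc 0 S ∧ g t ω ∈ 𝒦}).toReal / S
        ≤ 2/3 + (T' + ℓ) / (3 * S) :=
    Filter.eventually_atTop.mpr ⟨T' + 1, key⟩
  have htend : Filter.Tendsto (fun S : ℝ => 2/3 + (T' + ℓ) / (3 * S))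
      Filter.atTop (nhds (2/3 : ℝ)) := by
    have h0 : Filter.Tendsto (fun S : ℝ => (T' + ℓ) / (3 * S)) Filter.atTop (nhds 0) := by
      apply Filter.Tendsto.div_atTop (tendsto_const_nhds)
      exact Filter.Tendsto.const_mul_atTop (by norm_num) Filter.tendsto_id
    simpa using (tendsto_const_nhds.add h0)
  have hcob : Filter.IsCoboundedUnder (· ≤ ·)  Filter.atTop
      (fun S : ℝ => (volume {t : ℝ | t ∈ Set.Ioc 0 S ∧ g t ω ∈ 𝒦}).toReal / S) := by
    apply Filter.isCoboundedUnder_le_of_eventually_le Filter.atTop (x := 0)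
    filter_upwards [Filter.eventually_ge_atTop (0 : ℝ)] with S hS
    positivity
  have hbdd : Filter.IsBoundedUnder (· ≤ ·) Filter.atTop
      (fun S : ℝ => 2/3 + (T' + ℓ) / (3 * S)) := htend.isBoundedUnder_le
  have hle := Filter.limsup_le_limsup hev hcob hbdd
  rw [htend.limsup_eq] at hle
  linarith [le_trans hdens hle]
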